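/- There exist absolute constants c > 0 and C > 0 with the following property. For every positive integer m there exist N = m(m+1)/2 symmetric m×m real matrices M_1, ..., M_N that form a basis of the space of symmetric m×m matrices, such that each M_t has rank 1 and Frobenius norm 1, every entry of every M_t has absolute value at least c/m^7, and for every pair i, j ∈ {1,...,m} there exists λ ∈ ℝ^N with Σ_{t=1}^N λ_t M_t = e_i e_j^T + e_j e_i^T and ‖λ‖ ≤ C. -/

import Mathlib

namespace Rk1

variable {m : ℕ}

noncomputable def g (m : ℕ) (k s : Fin m) : ℝ := (if k = s then 1 else 0) + 1 / m

noncomputable def av (m : ℕ) (p : Fin m × Fin m) (s : Fin m) : ℝ := g m p.1 s + g m p.2 s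

noncomputable def cf (m : ℕ) (i k : Fin m) : ℝ := (if k = i then 1 else 0) - 1 / (2 * m)

lemma sum_cf (hm : 0 < m) (i : Fin m) : ∑ k, cf m i k = 1 / 2 := by
  have hm' : (m : ℝ) ≠ 0 := Nat.cast_ne_zero.mpr hm.ne'
  simp [cf, Finset.sum_sub_distrib, Finset.sum_ite_eq' Finset.univ i]
  field_simp
  ring

lemma sum_cf_g (hm : 0 < m) (i s : Fin m) :
    ∑ k, cf m i k * g m k s = if i = s then 1 else 0 := by
  have hm' : (m : ℝ) ≠ 0 := Nat.cast_ne_zero.mpr hm.ne'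
  have h1 : ∀ k, cf m i k * g m k s
      = (if k = s then cf m i k else 0) + cf m i k * (1 / m) := by
    intro k
    by_cases h : k = s <;> simp [g, h, mul_add]
  rw [Finset.sum_congr rfl fun k _ => h1 k, Finset.sum_add_distrib,
    Finset.sum_ite_eq' Finset.univ s (cf m i), ← Finset.sum_mul, sum_cf hm]
  simp only [Finset.mem_univ, if_true, cf]
  by_cases h : i = s
  · subst h; simp; field_simp; ring
  · rw [if_neg (fun hh => h hh.symm), if_neg h]; field_simp; ring

end Rk1

namespace Rk1

variable {m : ℕ}

lemma master_entry (hm : 0 < m) (i j s s' : Fin m) :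
    (∑ k, ∑ l, cf m i k * cf m j l * (av m (k, l) s * av m (k, l) s'))
      - (1/8) * ∑ k, (cf m i k + cf m j k) * (av m (k, k) s * av m (k, k) s')
    = (if i = s then (1:ℝ) else 0) * (if j = s' then 1 else 0)
      + (if j = s then (1:ℝ) else 0) * (if i = s' then 1 else 0) := by
  have expand : ∀ k l : Fin m, cf m i k * cf m j l * (av m (k, l) s * av m (k, l) s')
      = (cf m i k * (g m k s * g m k s')) * cf m j l
        + (cf m i k * g m k s) * (cf m j l * g m l s')
        + (cf m i k * g m k s') * (cf m j l * g m l s)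
        + cf m i k * (cf m j l * (g m l s * g m l s')) := by
    intro k l; simp only [av]; ring
  have hsum : (∑ k, ∑ l, cf m i k * cf m j l * (av m (k, l) s * av m (k, l) s'))
      = (∑ k, cf m i k * (g m k s * g m k s')) * (∑ l, cf m j l)
        + (∑ k, cf m i k * g m k s) * (∑ l, cf m j l * g m l s')
        + (∑ k, cf m i k * g m k s') * (∑ l, cf m j l * g m l s)
        + (∑ k, cf m i k) * (∑ l, cf m j l * (g m l s * g m l s')) := by
    simp only [expand, Finset.sum_add_distrib, ← Finset.sum_mul, ← Finset.mul_sum]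
    try rw [Finset.sum_mul, Finset.sum_mul, Finset.mul_sum]
  have hcorr : (∑ k, (cf m i k + cf m j k) * (av m (k, k) s * av m (k, k) s'))
      = 4 * (∑ k, cf m i k * (g m k s * g m k s')) + 4 * (∑ l, cf m j l * (g m l s * g m l s')) := by
    rw [Finset.mul_sum, Finset.mul_sum, ← Finset.sum_add_distrib]
    refine Finset.sum_congr rfl fun k _ => ?_
    simp only [av]; ring
  rw [hsum, hcorr, sum_cf hm i, sum_cf hm j, sum_cf_g hm i s, sum_cf_g hm j s',
    sum_cf_g hm i s', sum_cf_g hm j s]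
  ring

end Rk1

namespace Rk1

variable {m : ℕ}

lemma sum_diag_ite (G : Fin m × Fin m → ℝ) :
    (∑ p : Fin m × Fin m, if p.1 = p.2 then G p else 0) = ∑ k, G (k, k) := by
  rw [Fintype.sum_prod_type]
  refine Finset.sum_congr rfl fun k _ => ?_
  rw [Finset.sum_ite_eq Finset.univ k (fun l => G (k, l))]
  simp

lemma sum_swap_ite (h : Fin m × Fin m → ℝ) :
    (∑ p : Fin m × Fin m, if p.2 < p.1 then h p else 0)
      = ∑ p : Fin m × Fin m, if p.1 < p.2 then h (p.2, p.1) else 0 := by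
  exact Fintype.sum_equiv (Equiv.prodComm (Fin m) (Fin m))
    (fun p : Fin m × Fin m => if p.2 < p.1 then h p else 0)
    (fun p : Fin m × Fin m => if p.1 < p.2 then h (p.2, p.1) else 0) (fun p => rfl)

lemma sum_trichotomy (h : Fin m × Fin m → ℝ) :
    (∑ p : Fin m × Fin m, h p)
      = (∑ p : Fin m × Fin m, if p.1 < p.2 then h p else 0)
        + (∑ p : Fin m × Fin m, if p.2 < p.1 then h p else 0)
        + (∑ p : Fin m × Fin m, if p.1 = p.2 then h p else 0) := by
  rw [← Finset.sum_add_distrib, ← Finset.sum_add_distrib]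
  refine Finset.sum_congr rfl fun p _ => ?_
  rcases lt_trichotomy p.1 p.2 with hc | hc | hc
  · rw [if_pos hc, if_neg (asymm hc), if_neg (ne_of_lt hc)]; ring
  · have h1 : ¬ p.1 < p.2 := by rw [hc]; exact lt_irrefl _
    have h2 : ¬ p.2 < p.1 := by rw [hc]; exact lt_irrefl _
    rw [if_neg h1, if_neg h2, if_pos hc]; ring
  · rw [if_neg (asymm hc), if_pos hc, if_neg (ne_of_gt hc)]; ring

/-- unordered coefficient -/
noncomputable def lam0 (m : ℕ) (i j : Fin m) (p : Fin m × Fin m) : ℝ :=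
  if p.1 = p.2 then cf m i p.1 * cf m j p.1 - (1/8) * (cf m i p.1 + cf m j p.1)
  else cf m i p.1 * cf m j p.2 + cf m i p.2 * cf m j p.1

lemma master_unordered (i j : Fin m) (w : Fin m × Fin m → ℝ)
    (hw : ∀ k l, w (k, l) = w (l, k)) :
    (∑ p ∈ Finset.univ.filter (fun p : Fin m × Fin m => p.1 ≤ p.2), lam0 m i j p * w p)
      = (∑ k, ∑ l, cf m i k * cf m j l * w (k, l))
        - (1/8) * ∑ k, (cf m i k + cf m j k) * w (k, k) := by
  classical
  set h : Fin m × Fin m → ℝ := fun p => cf m i p.1 * cf m j p.2 * w p with hh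
  have key : ∀ p : Fin m × Fin m, (if p.1 ≤ p.2 then lam0 m i j p * w p else 0)
      = (if p.1 < p.2 then h p else 0) + (if p.1 < p.2 then h (p.2, p.1) else 0)
        + (if p.1 = p.2 then h p - (1/8) * ((cf m i p.1 + cf m j p.1) * w p) else 0) := by
    rintro ⟨a, b⟩
    dsimp only
    rcases lt_trichotomy a b with hc | hc | hc
    · rw [if_pos hc.le, if_pos hc, if_pos hc, if_neg (ne_of_lt hc), lam0, if_neg (ne_of_lt hc)]
      simp only [hh, hw b a]
      ring
    · subst hc
      rw [if_pos le_rfl, if_neg (lt_irrefl a), if_pos rfl]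
      simp only [lam0, hh, if_true]
      ring
    · rw [if_neg (not_le_of_gt hc), if_neg (asymm hc), if_neg (asymm hc), if_neg (ne_of_gt hc)]
      ring
  rw [Finset.sum_filter, Finset.sum_congr rfl fun p _ => key p]
  rw [Finset.sum_add_distrib, Finset.sum_add_distrib, ← sum_swap_ite h]
  have hdiag : (∑ p : Fin m × Fin m, if p.1 = p.2 then h p - (1/8) * ((cf m i p.1 + cf m j p.1) * w p) else 0)
      = (∑ p : Fin m × Fin m, if p.1 = p.2 then h p else 0)
        - (1/8) * ∑ k, (cf m i k + cf m j k) * w (k, k) := by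
    rw [sum_diag_ite (fun p => h p - (1/8) * ((cf m i p.1 + cf m j p.1) * w p)),
      sum_diag_ite h, Finset.mul_sum, ← Finset.sum_sub_distrib]
  have hprod : (∑ p : Fin m × Fin m, h p) = ∑ k, ∑ l, cf m i k * cf m j l * w (k, l) := by
    rw [Fintype.sum_prod_type]
  rw [hdiag, ← add_sub_assoc, ← sum_trichotomy h, hprod]

end Rk1

namespace Rk1

variable {m : ℕ}

noncomputable def AM (m : ℕ) (p : Fin m × Fin m) : Matrix (Fin m) (Fin m) ℝ :=
  Matrix.of fun s s' => av m p s * av m p s'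

@[simp] lemma AM_apply (p : Fin m × Fin m) (s s' : Fin m) :
    AM m p s s' = av m p s * av m p s' := rfl

noncomputable def nv (m : ℕ) (p : Fin m × Fin m) : ℝ := ∑ k, (av m p k)^2

lemma g_nonneg (hm : 0 < m) (k s : Fin m) : 0 ≤ g m k s := by
  have : (0:ℝ) < m := by exact_mod_cast hm
  unfold g; positivity

lemma g_le (hm : 0 < m) (k s : Fin m) : g m k s ≤ 2 := by
  have h1 : (1:ℝ) ≤ m := by exact_mod_cast hm
  have : 1 / (m:ℝ) ≤ 1 := by
    rw [div_le_one (by linarith)]; linarith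
  unfold g; split <;> linarith

lemma av_lower (hm : 0 < m) (p : Fin m × Fin m) (s : Fin m) : 2 / m ≤ av m p s := by
  have : (0:ℝ) < m := by exact_mod_cast hm
  unfold av g
  have h2 : 2 / (m:ℝ) = 1/m + 1/m := by ring
  split <;> split <;> rw [h2] <;> linarith [this]

lemma av_pos (hm : 0 < m) (p : Fin m × Fin m) (s : Fin m) : 0 < av m p s := by
  have h : (0:ℝ) < m := by exact_mod_cast hm
  have := av_lower hm p s
  have : (0:ℝ) < 2 / m := by positivity
  linarith [av_lower hm p s]

lemma av_upper (hm : 0 < m) (p : Fin m × Fin m) (s : Fin m) : av m p s ≤ 4 := by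
  have := g_le hm p.1 s
  have := g_le hm p.2 s
  unfold av; linarith

lemma av_diag_lower (hm : 0 < m) (p : Fin m × Fin m) : 1 ≤ av m p p.1 := by
  have := g_nonneg hm p.2 p.1
  have h : (0:ℝ) < m := by exact_mod_cast hm
  have : (0:ℝ) ≤ 1 / m := by positivity
  unfold av g
  rw [if_pos rfl]
  split <;> linarith

lemma nv_lower (hm : 0 < m) (p : Fin m × Fin m) : 1 ≤ nv m p := by
  have h1 : (1:ℝ) ≤ (av m p p.1)^2 := by
    have := av_diag_lower hm p
    nlinarith
  calc (1:ℝ) ≤ (av m p p.1)^2 := h1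
    _ ≤ ∑ k, (av m p k)^2 := by
        apply Finset.single_le_sum (f := fun k => (av m p k)^2)
          (fun k _ => sq_nonneg _) (Finset.mem_univ p.1)

lemma nv_pos (hm : 0 < m) (p : Fin m × Fin m) : 0 < nv m p := lt_of_lt_of_le one_pos (nv_lower hm p)

lemma nv_ne (hm : 0 < m) (p : Fin m × Fin m) : nv m p ≠ 0 := (nv_pos hm p).ne'

lemma nv_upper (hm : 0 < m) (p : Fin m × Fin m) : nv m p ≤ 18 := by
  have hmr : (1:ℝ) ≤ m := by exact_mod_cast hm
  have hmr0 : (0:ℝ) < m := by linarith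
  have key : ∀ s, (av m p s)^2
      ≤ 3 * (if p.1 = s then (1:ℝ) else 0) + 3 * (if p.2 = s then (1:ℝ) else 0) + 12 / m^2 := by
    intro s
    have ht : 0 < 1 / (m:ℝ) := by positivity
    have ht1 : 1 / (m:ℝ) ≤ 1 := by rw [div_le_one hmr0]; linarith
    have h12 : 12 / (m:ℝ)^2 = 12 * (1/m)^2 := by field_simp
    unfold av g
    split <;> split <;> rw [h12] <;> nlinarith [sq_nonneg (1 - 2*(1/(m:ℝ)))]
  calc nv m p ≤ ∑ s, (3 * (if p.1 = s then (1:ℝ) else 0) + 3 * (if p.2 = s then (1:ℝ) else 0) + 12 / m^2) :=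
        Finset.sum_le_sum fun s _ => key s
    _ = 3 + 3 + 12 / m := by
        rw [Finset.sum_add_distrib, Finset.sum_add_distrib, ← Finset.mul_sum, ← Finset.mul_sum,
          Finset.sum_ite_eq Finset.univ p.1 (fun _ => (1:ℝ)),
          Finset.sum_ite_eq Finset.univ p.2 (fun _ => (1:ℝ)), Finset.sum_const]
        simp
        field_simp
    _ ≤ 18 := by
        have : 12 / (m:ℝ) ≤ 12 := by
          rw [div_le_iff₀ hmr0]; nlinarith
        linarith

end Rk1

namespace Rk1

variable {m : ℕ}

lemma cf_abs_le_one (hm : 0 < m) (i k : Fin m) : |cf m i k| ≤ 1 := by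
  have hmr : (1:ℝ) ≤ m := by exact_mod_cast hm
  have h : 1 / (2*(m:ℝ)) ≤ 1/2 := by
    rw [div_le_div_iff₀ (by linarith) (by norm_num)]; linarith
  have h0 : 0 < 1 / (2*(m:ℝ)) := by positivity
  unfold cf
  split <;> rw [abs_le] <;> constructor <;> linarith

lemma cf_abs_small (hm : 0 < m) {i k : Fin m} (h : k ≠ i) : |cf m i k| ≤ 1 / (2*m) := by
  have h0 : 0 < 1 / (2*(m:ℝ)) := by positivity
  unfold cf
  rw [if_neg h]
  rw [abs_le]; constructor <;> linarith

lemma lam0_abs_le_two (hm : 0 < m) (i j : Fin m) (p : Fin m × Fin m) :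
    |lam0 m i j p| ≤ 2 := by
  have h1 := cf_abs_le_one hm i p.1
  have h2 := cf_abs_le_one hm j p.1
  have h3 := cf_abs_le_one hm i p.2
  have h4 := cf_abs_le_one hm j p.2
  unfold lam0
  split
  · calc |cf m i p.1 * cf m j p.1 - 1/8 * (cf m i p.1 + cf m j p.1)|
        ≤ |cf m i p.1 * cf m j p.1| + |1/8 * (cf m i p.1 + cf m j p.1)| := abs_sub _ _
      _ ≤ 2 := by
          rw [abs_mul, abs_mul]
          have := abs_add_le (cf m i p.1) (cf m j p.1)
          have hn1 := abs_nonneg (cf m i p.1)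
          have hn2 := abs_nonneg (cf m j p.1)
          have : |cf m i p.1| * |cf m j p.1| ≤ 1 := by nlinarith
          rw [abs_of_pos (by norm_num : (0:ℝ) < 1/8)]
          nlinarith [abs_add_le (cf m i p.1) (cf m j p.1)]
  · calc |cf m i p.1 * cf m j p.2 + cf m i p.2 * cf m j p.1|
        ≤ |cf m i p.1 * cf m j p.2| + |cf m i p.2 * cf m j p.1| := abs_add_le _ _
      _ ≤ 2 := by
          rw [abs_mul, abs_mul]
          have hn1 := abs_nonneg (cf m i p.1)
          have hn2 := abs_nonneg (cf m i p.2)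
          nlinarith

lemma lam0_abs_small (hm : 0 < m) (i j : Fin m) (p : Fin m × Fin m)
    (h : ¬((p.1 = i ∨ p.1 = j) ∧ (p.2 = i ∨ p.2 = j))) :
    |lam0 m i j p| ≤ 1 / m := by
  have hmr : (1:ℝ) ≤ m := by exact_mod_cast hm
  have hmr0 : (0:ℝ) < m := by linarith
  have hb : 1 / (2*(m:ℝ)) ≤ 1/2 := by
    rw [div_le_div_iff₀ (by linarith) (by norm_num)]; linarith
  have h0 : 0 < 1 / (2*(m:ℝ)) := by positivity
  have key : ∀ a b c d : ℝ, |a| ≤ 1 → |b| ≤ 1 → |c| ≤ 1/(2*m) → |d| ≤ 1/(2*m) →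
      |a * c + d * b| ≤ 1 / m := by
    intro a b c d ha hb' hc hd
    have h1 : |a * c| ≤ 1/(2*m) := by
      rw [abs_mul]
      have := abs_nonneg a; have := abs_nonneg c
      nlinarith
    have h2 : |d * b| ≤ 1/(2*m) := by
      rw [abs_mul]
      have := abs_nonneg d; have := abs_nonneg b
      nlinarith
    calc |a*c + d*b| ≤ |a*c| + |d*b| := abs_add_le _ _
      _ ≤ 1/m := by rw [show 1/(m:ℝ) = 1/(2*m) + 1/(2*m) by ring] at *; linarith
  replace h : (p.1 ≠ i ∧ p.1 ≠ j) ∨ (p.2 ≠ i ∧ p.2 ≠ j) := by tauto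
  unfold lam0
  split
  · rename_i hd
    -- diagonal case : p.1 = p.2, and p.1 ∉ {i, j}
    have hni : p.1 ≠ i ∧ p.1 ≠ j := by
      rcases h with ⟨h1, h2⟩ | ⟨h1, h2⟩
      · exact ⟨h1, h2⟩
      · rw [hd]; exact ⟨h1, h2⟩
    have hci := cf_abs_small hm hni.1
    have hcj := cf_abs_small hm hni.2
    calc |cf m i p.1 * cf m j p.1 - 1/8 * (cf m i p.1 + cf m j p.1)|
        ≤ |cf m i p.1 * cf m j p.1| + |1/8 * (cf m i p.1 + cf m j p.1)| := abs_sub _ _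
      _ ≤ 1/m := by
          rw [abs_mul, abs_mul, abs_of_pos (by norm_num : (0:ℝ) < 1/8)]
          have h5 := abs_add_le (cf m i p.1) (cf m j p.1)
          have := abs_nonneg (cf m i p.1)
          have := abs_nonneg (cf m j p.1)
          have e1 : |cf m i p.1| * |cf m j p.1| ≤ 1/(2*m) * (1/(2*m)) := by nlinarith
          have e2 : 1/(2*(m:ℝ)) * (1/(2*m)) ≤ (1/2) * (1/(2*m)) := by nlinarith
          have e3 : (1/8 : ℝ) * |cf m i p.1 + cf m j p.1| ≤ 1/8 * (1/(2*m) + 1/(2*m)) := by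
            nlinarith
          rw [show 1/(m:ℝ) = 1/(2*m) + 1/(2*m) by ring]
          have : (1/8 : ℝ) * (1/(2*m) + 1/(2*m)) ≤ 1/(2*m) := by
            rw [show (1/8:ℝ) * (1/(2*m) + 1/(2*m)) = (1/4) * (1/(2*m)) by ring]
            nlinarith
          linarith
  · rcases h with ⟨h1, h2⟩ | ⟨h1, h2⟩
    · have e : cf m i p.1 * cf m j p.2 + cf m i p.2 * cf m j p.1
          = cf m j p.2 * cf m i p.1 + cf m j p.1 * cf m i p.2 := by ring
      rw [e]
      exact key _ _ _ _ (cf_abs_le_one hm j p.2) (cf_abs_le_one hm i p.2)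
        (cf_abs_small hm h1) (cf_abs_small hm h2)
    · exact key _ _ _ _ (cf_abs_le_one hm i p.1) (cf_abs_le_one hm j p.1)
        (cf_abs_small hm h2) (cf_abs_small hm h1)

end Rk1

namespace Rk1

variable {m : ℕ}

lemma av_swap (k l : Fin m) (x : Fin m) : av m (k, l) x = av m (l, k) x := by
  simp only [av]
  exact add_comm _ _

lemma combo (hm : 0 < m) (i j : Fin m) :
    (∑ p : {p : Fin m × Fin m // p.1 ≤ p.2}, lam0 m i j p.1 • AM m p.1)
      = Matrix.single i j 1 + Matrix.single j i 1 := by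
  apply Matrix.ext
  intro s s'
  have h1 : (∑ p : {p : Fin m × Fin m // p.1 ≤ p.2}, lam0 m i j p.1 • AM m p.1) s s'
      = ∑ p : {p : Fin m × Fin m // p.1 ≤ p.2}, lam0 m i j p.1 * (av m p.1 s * av m p.1 s') := by
    rw [Matrix.sum_apply]
    exact Finset.sum_congr rfl fun p _ => rfl
  have h2 : (∑ p : {p : Fin m × Fin m // p.1 ≤ p.2}, lam0 m i j p.1 * (av m p.1 s * av m p.1 s'))
      = ∑ q ∈ Finset.univ.filter (fun q : Fin m × Fin m => q.1 ≤ q.2),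
          lam0 m i j q * (av m q s * av m q s') :=
    (Finset.sum_subtype _ (by simp) (fun q => lam0 m i j q * (av m q s * av m q s'))).symm
  have h3 := master_unordered i j (fun q : Fin m × Fin m => av m q s * av m q s')
    (fun k l => by rw [av_swap k l s, av_swap k l s'])
  have h4 := master_entry hm i j s s'
  rw [h1, h2, h3, h4]
  rw [Matrix.add_apply]
  simp only [Matrix.single, Matrix.of_apply]
  by_cases his : i = s <;> by_cases hjs' : j = s' <;> by_cases hjs : j = s <;>
    by_cases his' : i = s' <;> by_cases hss : s = s' <;>
      simp [his, hjs', hjs, his', hss]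

end Rk1

namespace Rk1

lemma card_pairs (m : ℕ) : Fintype.card {p : Fin m × Fin m // p.1 ≤ p.2} = m * (m + 1) / 2 := by
  rw [← Fintype.card_congr (Sym2.sortEquiv (α := Fin m)), Sym2.card]
  rw [Nat.choose_two_right]
  simp [Nat.mul_comm]

end Rk1

theorem rank_one_symmetric_basis :
    ∃ c C : ℝ, 0 < c ∧ 0 < C ∧ ∀ m : ℕ, 0 < m →
      ∃ M : Fin (m * (m + 1) / 2) → Matrix (Fin m) (Fin m) ℝ,
        (∀ t, (M t).IsSymm) ∧
        LinearIndependent ℝ M ∧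
        (∀ S : Matrix (Fin m) (Fin m) ℝ, S.IsSymm → S ∈ Submodule.span ℝ (Set.range M)) ∧
        (∀ t, (M t).rank = 1) ∧
        (∀ t, Real.sqrt (∑ s, ∑ s', M t s s' ^ 2) = 1) ∧
        (∀ t s s', c / (m : ℝ) ^ 7 ≤ |M t s s'|) ∧
        (∀ i j : Fin m, ∃ lam : Fin (m * (m + 1) / 2) → ℝ,
          (∑ t, lam t • M t) = Matrix.single i j 1 + Matrix.single j i 1 ∧
          Real.sqrt (∑ t, lam t ^ 2) ≤ C) := by
  classical
  refine ⟨1/10, 100, by norm_num, by norm_num, fun m hm => ?_⟩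
  have hmr : (1:ℝ) ≤ m := by exact_mod_cast hm
  have hmr0 : (0:ℝ) < m := by linarith
  let e : Fin (m * (m + 1) / 2) ≃ {p : Fin m × Fin m // p.1 ≤ p.2} :=
    (Fintype.equivFinOfCardEq (Rk1.card_pairs m)).symm
  have hrep : ∀ i j : Fin m,
      (∑ t, (Rk1.lam0 m i j (e t).1 * Rk1.nv m (e t).1) •
          ((Rk1.nv m (e t).1)⁻¹ • Rk1.AM m (e t).1))
        = Matrix.single i j 1 + Matrix.single j i 1 := by
    intro i j
    have hstep : ∀ t, (Rk1.lam0 m i j (e t).1 * Rk1.nv m (e t).1) •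
        ((Rk1.nv m (e t).1)⁻¹ • Rk1.AM m (e t).1)
        = Rk1.lam0 m i j (e t).1 • Rk1.AM m (e t).1 := by
      intro t
      rw [smul_smul]
      congr 1
      rw [mul_assoc, mul_inv_cancel₀ (Rk1.nv_ne hm (e t).1), mul_one]
    rw [Finset.sum_congr rfl fun t _ => hstep t]
    rw [Equiv.sum_comp e (fun p : {p : Fin m × Fin m // p.1 ≤ p.2} =>
      Rk1.lam0 m i j p.1 • Rk1.AM m p.1)]
    exact Rk1.combo hm i j
  refine ⟨fun t => (Rk1.nv m (e t).1)⁻¹ • Rk1.AM m (e t).1, ?_, ?_, ?_, ?_, ?_, ?_, ?_⟩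
  · -- symmetric
    intro t
    show ((Rk1.nv m (e t).1)⁻¹ • Rk1.AM m (e t).1).IsSymm
    unfold Matrix.IsSymm
    rw [Matrix.transpose_smul]
    congr 1
    apply Matrix.ext
    intro s s'
    rw [Matrix.transpose_apply]
    simp only [Rk1.AM_apply]
    ring
  · -- linear independence
    rw [Fintype.linearIndependent_iff]
    intro gc hsum t
    set y : {p : Fin m × Fin m // p.1 ≤ p.2} → ℝ :=
      fun p => gc (e.symm p) * (Rk1.nv m p.1)⁻¹ with hy
    have hYsum : (∑ p : {p : Fin m × Fin m // p.1 ≤ p.2}, y p • Rk1.AM m p.1) = 0 := by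
      rw [← Equiv.sum_comp e (fun p : {p : Fin m × Fin m // p.1 ≤ p.2} => y p • Rk1.AM m p.1)]
      have hterm : ∀ t', y (e t') • Rk1.AM m (e t').1
          = gc t' • ((Rk1.nv m (e t').1)⁻¹ • Rk1.AM m (e t').1) := by
        intro t'
        rw [smul_smul, hy]
        simp only [Equiv.symm_apply_apply]
      rw [Finset.sum_congr rfl fun t' _ => hterm t']
      exact hsum
    have hent : ∀ s s' : Fin m,
        (∑ p : {p : Fin m × Fin m // p.1 ≤ p.2}, y p * (Rk1.av m p.1 s * Rk1.av m p.1 s')) = 0 := by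
      intro s s'
      have h0 : (∑ p : {p : Fin m × Fin m // p.1 ≤ p.2}, y p • Rk1.AM m p.1) s s' = 0 := by
        rw [hYsum]; rfl
      rw [Matrix.sum_apply] at h0
      exact h0
    have hip : ∀ (rr : Fin m) (p : Fin m × Fin m),
        (∑ s, Rk1.cf m rr s * Rk1.av m p s)
          = (if rr = p.1 then (1:ℝ) else 0) + (if rr = p.2 then 1 else 0) := by
      intro rr p
      have hsplit : ∀ s, Rk1.cf m rr s * Rk1.av m p s
          = Rk1.cf m rr s * Rk1.g m p.1 s + Rk1.cf m rr s * Rk1.g m p.2 s := by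
        intro s
        rw [Rk1.av, mul_add]
      rw [Finset.sum_congr rfl fun s _ => hsplit s, Finset.sum_add_distrib]
      have hg : ∀ a b : Fin m, Rk1.g m a b = Rk1.g m b a := by
        intro a b; simp [Rk1.g, eq_comm]
      have e1 : (∑ s, Rk1.cf m rr s * Rk1.g m p.1 s) = ∑ s, Rk1.cf m rr s * Rk1.g m s p.1 :=
        Finset.sum_congr rfl fun s _ => by rw [hg p.1 s]
      have e2 : (∑ s, Rk1.cf m rr s * Rk1.g m p.2 s) = ∑ s, Rk1.cf m rr s * Rk1.g m s p.2 :=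
        Finset.sum_congr rfl fun s _ => by rw [hg p.2 s]
      rw [e1, e2, Rk1.sum_cf_g hm rr p.1, Rk1.sum_cf_g hm rr p.2]
    have hPhi : ∀ r r' : Fin m, (∑ p : {p : Fin m × Fin m // p.1 ≤ p.2}, y p *
        (((if r = p.1.1 then (1:ℝ) else 0) + (if r = p.1.2 then 1 else 0)) *
         ((if r' = p.1.1 then (1:ℝ) else 0) + (if r' = p.1.2 then 1 else 0)))) = 0 := by
      intro r r'
      have key : ∀ p : {p : Fin m × Fin m // p.1 ≤ p.2}, y p *
          (((if r = p.1.1 then (1:ℝ) else 0) + (if r = p.1.2 then 1 else 0)) *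
           ((if r' = p.1.1 then (1:ℝ) else 0) + (if r' = p.1.2 then 1 else 0)))
          = ∑ s, ∑ s', (Rk1.cf m r s * Rk1.cf m r' s') * (y p * (Rk1.av m p.1 s * Rk1.av m p.1 s')) := by
        intro p
        rw [← hip r p.1, ← hip r' p.1, Finset.sum_mul_sum, Finset.mul_sum]
        refine Finset.sum_congr rfl fun s _ => ?_
        rw [Finset.mul_sum]
        refine Finset.sum_congr rfl fun s' _ => ?_
        ring
      rw [Finset.sum_congr rfl fun p _ => key p, Finset.sum_comm]
      have hz : ∀ s : Fin m, (∑ p : {p : Fin m × Fin m // p.1 ≤ p.2},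
          ∑ s', (Rk1.cf m r s * Rk1.cf m r' s') * (y p * (Rk1.av m p.1 s * Rk1.av m p.1 s'))) = 0 := by
        intro s
        rw [Finset.sum_comm]
        have hz2 : ∀ s' : Fin m, (∑ p : {p : Fin m × Fin m // p.1 ≤ p.2},
            (Rk1.cf m r s * Rk1.cf m r' s') * (y p * (Rk1.av m p.1 s * Rk1.av m p.1 s'))) = 0 := by
          intro s'
          rw [← Finset.mul_sum, hent s s', mul_zero]
        rw [Finset.sum_congr rfl fun s' _ => hz2 s']
        simp
      rw [Finset.sum_congr rfl fun s _ => hz s]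
      simp
    have hoff : ∀ p : {p : Fin m × Fin m // p.1 ≤ p.2}, p.1.1 < p.1.2 → y p = 0 := by
      intro p hlt
      have hside : ∀ q : {p : Fin m × Fin m // p.1 ≤ p.2}, q ≠ p → y q *
          (((if p.1.1 = q.1.1 then (1:ℝ) else 0) + (if p.1.1 = q.1.2 then 1 else 0)) *
           ((if p.1.2 = q.1.1 then (1:ℝ) else 0) + (if p.1.2 = q.1.2 then 1 else 0))) = 0 := by
        intro q hq
        by_contra hne0
        have hF1 : ((if p.1.1 = q.1.1 then (1:ℝ) else 0) + (if p.1.1 = q.1.2 then 1 else 0)) ≠ 0 := by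
          intro h; apply hne0; rw [h]; ring
        have hF2 : ((if p.1.2 = q.1.1 then (1:ℝ) else 0) + (if p.1.2 = q.1.2 then 1 else 0)) ≠ 0 := by
          intro h; apply hne0; rw [h]; ring
        have hd1 : p.1.1 = q.1.1 ∨ p.1.1 = q.1.2 := by
          by_contra hcon; push_neg at hcon
          exact hF1 (by rw [if_neg hcon.1, if_neg hcon.2]; ring)
        have hd2 : p.1.2 = q.1.1 ∨ p.1.2 = q.1.2 := by
          by_contra hcon; push_neg at hcon
          exact hF2 (by rw [if_neg hcon.1, if_neg hcon.2]; ring)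
        have hple : q.1.1 ≤ q.1.2 := q.2
        rcases hd1 with h1 | h1 <;> rcases hd2 with h2 | h2
        · exact absurd (h1.trans h2.symm) (ne_of_lt hlt)
        · exact hq (Subtype.ext (Prod.ext_iff.mpr ⟨h1.symm, h2.symm⟩))
        · have hba : p.1.2 ≤ p.1.1 := by rw [h2, h1]; exact hple
          exact absurd hlt (not_lt_of_ge hba)
        · exact absurd (h1.trans h2.symm) (ne_of_lt hlt)
      have h0 := hPhi p.1.1 p.1.2
      rw [Fintype.sum_eq_single p hside] at h0
      have hne : p.1.1 ≠ p.1.2 := ne_of_lt hlt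
      simpa [hne, Ne.symm hne] using h0
    have hdiag : ∀ p : {p : Fin m × Fin m // p.1 ≤ p.2}, p.1.1 = p.1.2 → y p = 0 := by
      intro p hdg
      have hside : ∀ q : {p : Fin m × Fin m // p.1 ≤ p.2}, q ≠ p → y q *
          (((if p.1.1 = q.1.1 then (1:ℝ) else 0) + (if p.1.1 = q.1.2 then 1 else 0)) *
           ((if p.1.1 = q.1.1 then (1:ℝ) else 0) + (if p.1.1 = q.1.2 then 1 else 0))) = 0 := by
        intro q hq
        by_contra hne0
        have hyq : y q ≠ 0 := by
          intro h; apply hne0; rw [h]; ring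
        rcases lt_or_eq_of_le q.2 with hlt' | heq'
        · exact hyq (hoff q hlt')
        · have hF1 : ((if p.1.1 = q.1.1 then (1:ℝ) else 0) + (if p.1.1 = q.1.2 then 1 else 0)) ≠ 0 := by
            intro h; apply hne0; rw [h]; ring
          have hd1 : p.1.1 = q.1.1 ∨ p.1.1 = q.1.2 := by
            by_contra hcon; push_neg at hcon
            exact hF1 (by rw [if_neg hcon.1, if_neg hcon.2]; ring)
          have h11 : p.1.1 = q.1.1 := by
            rcases hd1 with h | h
            · exact h
            · exact h.trans heq'.symm
          refine hq (Subtype.ext (Prod.ext_iff.mpr ⟨h11.symm, ?_⟩))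
          rw [← heq', ← h11, hdg]
      have h0 := hPhi p.1.1 p.1.1
      rw [Fintype.sum_eq_single p hside] at h0
      rw [if_pos rfl, if_pos hdg] at h0
      have : y p * 4 = 0 := by rw [← h0]; ring
      linarith
    have hy0 : y (e t) = 0 := by
      rcases lt_or_eq_of_le (e t).2 with h | h
      · exact hoff _ h
      · exact hdiag _ h
    rw [hy] at hy0
    simp only [Equiv.symm_apply_apply] at hy0
    rcases mul_eq_zero.mp hy0 with h | h
    · exact h
    · exact absurd h (inv_ne_zero (Rk1.nv_ne hm (e t).1))
  · -- spanning
    intro S hS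
    have hstd : ∀ i j : Fin m, Matrix.single i j 1 + Matrix.single j i 1
        ∈ Submodule.span ℝ (Set.range fun t => (Rk1.nv m (e t).1)⁻¹ • Rk1.AM m (e t).1) := by
      intro i j
      rw [← hrep i j]
      exact Submodule.sum_mem _ fun t _ =>
        Submodule.smul_mem _ _ (Submodule.subset_span (Set.mem_range_self t))
    have hdecomp : S = ∑ p : {p : Fin m × Fin m // p.1 ≤ p.2},
        (if p.1.1 = p.1.2 then S p.1.1 p.1.1 / 2 else S p.1.1 p.1.2) •
          (Matrix.single p.1.1 p.1.2 1 + Matrix.single p.1.2 p.1.1 1) := by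
      apply Matrix.ext
      intro s s'
      rw [Matrix.sum_apply]
      rcases le_total s s' with hss | hss
      · have hside : ∀ q : {p : Fin m × Fin m // p.1 ≤ p.2},
            q ≠ (⟨(s, s'), hss⟩ : {p : Fin m × Fin m // p.1 ≤ p.2}) →
            ((if q.1.1 = q.1.2 then S q.1.1 q.1.1 / 2 else S q.1.1 q.1.2) •
              (Matrix.single q.1.1 q.1.2 (1:ℝ) + Matrix.single q.1.2 q.1.1 (1:ℝ))) s s' = 0 := by
          intro q hq
          simp only [Matrix.smul_apply, Matrix.add_apply, Matrix.single,
            Matrix.of_apply, smul_eq_mul]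
          by_cases h1 : q.1.1 = s ∧ q.1.2 = s'
          · exact absurd (Subtype.ext (Prod.ext_iff.mpr ⟨h1.1, h1.2⟩)) hq
          · by_cases h2 : q.1.2 = s ∧ q.1.1 = s'
            · have hss' : s' ≤ s := by rw [← h2.1, ← h2.2]; exact q.2
              have heq : s = s' := le_antisymm hss hss'
              exact absurd (Subtype.ext (Prod.ext_iff.mpr
                ⟨h2.2.trans heq.symm, h2.1.trans heq⟩)) hq
            · rw [if_neg h1, if_neg h2]
              ring
        rw [Fintype.sum_eq_single (⟨(s, s'), hss⟩ : {p : Fin m × Fin m // p.1 ≤ p.2}) hside]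
        by_cases hd : s = s'
        · subst hd
          simp [Matrix.single]
          try ring
        · simp [Matrix.single, hd, Ne.symm hd]
      · have hside : ∀ q : {p : Fin m × Fin m // p.1 ≤ p.2},
            q ≠ (⟨(s', s), hss⟩ : {p : Fin m × Fin m // p.1 ≤ p.2}) →
            ((if q.1.1 = q.1.2 then S q.1.1 q.1.1 / 2 else S q.1.1 q.1.2) •
              (Matrix.single q.1.1 q.1.2 (1:ℝ) + Matrix.single q.1.2 q.1.1 (1:ℝ))) s s' = 0 := by
          intro q hq
          simp only [Matrix.smul_apply, Matrix.add_apply, Matrix.single,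
            Matrix.of_apply, smul_eq_mul]
          by_cases h1 : q.1.1 = s ∧ q.1.2 = s'
          · have hss' : s ≤ s' := by rw [← h1.1, ← h1.2]; exact q.2
            have heq : s = s' := le_antisymm hss' hss
            exact absurd (Subtype.ext (Prod.ext_iff.mpr
              ⟨h1.1.trans heq, h1.2.trans heq.symm⟩)) hq
          · by_cases h2 : q.1.2 = s ∧ q.1.1 = s'
            · exact absurd (Subtype.ext (Prod.ext_iff.mpr ⟨h2.2, h2.1⟩)) hq
            · rw [if_neg h1, if_neg h2]
              ring
        rw [Fintype.sum_eq_single (⟨(s', s), hss⟩ : {p : Fin m × Fin m // p.1 ≤ p.2}) hside]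
        by_cases hd : s' = s
        · subst hd
          simp [Matrix.single]
          try ring
        · rw [hS.apply s' s]
          simp [Matrix.single, hd, Ne.symm hd]
    rw [hdecomp]
    exact Submodule.sum_mem _ fun p _ => Submodule.smul_mem _ _ (hstd p.1.1 p.1.2)
  · -- rank one
    intro t
    set p := (e t).1 with hp
    have hnv := Rk1.nv_pos hm p
    have hnvne : Rk1.nv m p ≠ 0 := hnv.ne'
    set b : Fin m → ℝ := fun s => (Rk1.nv m p)⁻¹ * Rk1.av m p s with hb
    have hb0 : b ≠ 0 := by
      intro h0
      have h1 := congrFun h0 p.1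
      have hav := Rk1.av_pos hm p p.1
      have : (0:ℝ) < (Rk1.nv m p)⁻¹ * Rk1.av m p p.1 := by positivity
      rw [hb] at h1
      simp only [Pi.zero_apply] at h1
      linarith [this]
    have hmv : ∀ x : Fin m → ℝ,
        ((Rk1.nv m p)⁻¹ • Rk1.AM m p).mulVec x = (∑ s', Rk1.av m p s' * x s') • b := by
      intro x
      funext s
      simp only [Matrix.mulVec, dotProduct, Matrix.smul_apply, Rk1.AM_apply,
        smul_eq_mul, Pi.smul_apply, hb]
      rw [Finset.sum_mul]
      exact Finset.sum_congr rfl fun s' _ => by ring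
    have hrange : LinearMap.range ((Rk1.nv m p)⁻¹ • Rk1.AM m p).mulVecLin
        = Submodule.span ℝ {b} := by
      apply le_antisymm
      · rintro y ⟨x, rfl⟩
        rw [Matrix.mulVecLin_apply, hmv]
        exact Submodule.smul_mem _ _ (Submodule.mem_span_singleton_self b)
      · rw [Submodule.span_singleton_le_iff_mem]
        refine ⟨(Rk1.nv m p)⁻¹ • Rk1.av m p, ?_⟩
        rw [Matrix.mulVecLin_apply, hmv]
        have : (∑ s', Rk1.av m p s' * ((Rk1.nv m p)⁻¹ • Rk1.av m p) s') = 1 := by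
          simp only [Pi.smul_apply, smul_eq_mul]
          have : (∑ s', Rk1.av m p s' * ((Rk1.nv m p)⁻¹ * Rk1.av m p s'))
              = (Rk1.nv m p)⁻¹ * ∑ s', (Rk1.av m p s')^2 := by
            rw [Finset.mul_sum]
            exact Finset.sum_congr rfl fun s' _ => by ring
          rw [this]
          exact inv_mul_cancel₀ hnvne
        rw [this, one_smul]
    show ((Rk1.nv m p)⁻¹ • Rk1.AM m p).rank = 1
    rw [Matrix.rank, hrange, finrank_span_singleton hb0]
  · -- Frobenius norm one
    intro t
    set p := (e t).1 with hp
    have hnv := Rk1.nv_pos hm p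
    have hnvne : Rk1.nv m p ≠ 0 := hnv.ne'
    have htot : (∑ s, ∑ s', (((Rk1.nv m p)⁻¹ • Rk1.AM m p) s s')^2) = 1 := by
      have hrow : ∀ s, (∑ s', (((Rk1.nv m p)⁻¹ • Rk1.AM m p) s s')^2)
          = ((Rk1.nv m p)⁻¹^2 * Rk1.nv m p) * (Rk1.av m p s)^2 := by
        intro s
        simp only [Matrix.smul_apply, Rk1.AM_apply, smul_eq_mul]
        rw [show ((Rk1.nv m p)⁻¹^2 * Rk1.nv m p) * (Rk1.av m p s)^2
            = ((Rk1.nv m p)⁻¹^2 * (Rk1.av m p s)^2) * ∑ s', (Rk1.av m p s')^2 by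
          rw [Rk1.nv]; ring, Finset.mul_sum]
        exact Finset.sum_congr rfl fun s' _ => by ring
      rw [Finset.sum_congr rfl fun s _ => hrow s, ← Finset.mul_sum]
      rw [show (∑ s, (Rk1.av m p s)^2) = Rk1.nv m p from rfl]
      field_simp
    rw [htot, Real.sqrt_one]
  · -- entries bounded below
    intro t s s'
    set p := (e t).1 with hp
    have hnv := Rk1.nv_pos hm p
    have h18 := Rk1.nv_upper hm p
    have hinv : (18:ℝ)⁻¹ ≤ (Rk1.nv m p)⁻¹ := by
      apply inv_anti₀ hnv h18
    have havs := Rk1.av_lower hm p s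
    have havs' := Rk1.av_lower hm p s'
    have hpos : (0:ℝ) < 2/m := by positivity
    have hprod : (2/(m:ℝ)) * (2/m) ≤ Rk1.av m p s * Rk1.av m p s' :=
      mul_le_mul havs havs' hpos.le (le_trans hpos.le havs)
    have hkey : (1/10 : ℝ)/m^7 ≤ (18:ℝ)⁻¹ * ((2/m)*(2/m)) := by
      have hq : (18:ℝ)⁻¹ * ((2/m)*(2/m)) = 2/(9 * m^2) := by
        field_simp
        ring
      rw [hq, div_le_div_iff₀ (by positivity) (by positivity)]
      have h25 : (m:ℝ)^2 ≤ (m:ℝ)^7 := pow_le_pow_right₀ hmr (by norm_num)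
      nlinarith
    have hentry : ((Rk1.nv m p)⁻¹ • Rk1.AM m p) s s'
        = (Rk1.nv m p)⁻¹ * (Rk1.av m p s * Rk1.av m p s') := by
      simp [Matrix.smul_apply, Rk1.AM_apply]
    have hepos : (0:ℝ) < (Rk1.nv m p)⁻¹ * (Rk1.av m p s * Rk1.av m p s') := by
      have := Rk1.av_pos hm p s
      have := Rk1.av_pos hm p s'
      positivity
    show (1/10 : ℝ)/(m:ℝ)^7 ≤ |((Rk1.nv m p)⁻¹ • Rk1.AM m p) s s'|
    rw [hentry, abs_of_pos hepos]
    calc (1/10 : ℝ)/m^7 ≤ (18:ℝ)⁻¹ * ((2/m)*(2/m)) := hkey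
      _ ≤ (Rk1.nv m p)⁻¹ * (Rk1.av m p s * Rk1.av m p s') := by
          apply mul_le_mul hinv hprod (by positivity) (inv_nonneg.mpr hnv.le)
  · -- lambda representation with bounded norm
    intro i j
    refine ⟨fun t => Rk1.lam0 m i j (e t).1 * Rk1.nv m (e t).1, hrep i j, ?_⟩
    have hsum2 : (∑ t, (Rk1.lam0 m i j (e t).1 * Rk1.nv m (e t).1)^2)
        = ∑ p : {p : Fin m × Fin m // p.1 ≤ p.2}, (Rk1.lam0 m i j p.1 * Rk1.nv m p.1)^2 :=
      Equiv.sum_comp e (fun p : {p : Fin m × Fin m // p.1 ≤ p.2} =>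
        (Rk1.lam0 m i j p.1 * Rk1.nv m p.1)^2)
    have sqb : ∀ x B : ℝ, |x| ≤ B → x^2 ≤ B^2 := by
      intro x B h
      have h2 := pow_le_pow_left₀ (abs_nonneg x) h 2
      rwa [sq_abs] at h2
    set f : {p : Fin m × Fin m // p.1 ≤ p.2} → ℝ :=
      fun p => (Rk1.lam0 m i j p.1 * Rk1.nv m p.1)^2 with hf
    set cond : {p : Fin m × Fin m // p.1 ≤ p.2} → Prop :=
      fun p => (p.1.1 = i ∨ p.1.1 = j) ∧ (p.1.2 = i ∨ p.1.2 = j) with hcond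
    have hsplit := Finset.sum_filter_add_sum_filter_not Finset.univ cond f
    have hbig : ∀ p ∈ Finset.univ.filter cond, f p ≤ 1296 := by
      intro p _
      have h1 := Rk1.lam0_abs_le_two hm i j p.1
      have h2 := Rk1.nv_upper hm p.1
      have h3 := (Rk1.nv_pos hm p.1).le
      have habs : |Rk1.lam0 m i j p.1 * Rk1.nv m p.1| ≤ 36 := by
        rw [abs_mul, abs_of_nonneg h3]
        have := abs_nonneg (Rk1.lam0 m i j p.1)
        nlinarith
      have := sqb _ _ habs
      norm_num at this
      exact this
    have hsmall : ∀ p ∈ Finset.univ.filter (fun p => ¬ cond p), f p ≤ 324 / m^2 := by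
      intro p hp
      rw [Finset.mem_filter] at hp
      have h1 := Rk1.lam0_abs_small hm i j p.1 hp.2
      have h2 := Rk1.nv_upper hm p.1
      have h3 := (Rk1.nv_pos hm p.1).le
      have habs : |Rk1.lam0 m i j p.1 * Rk1.nv m p.1| ≤ 18 / m := by
        rw [abs_mul, abs_of_nonneg h3]
        have h4 := abs_nonneg (Rk1.lam0 m i j p.1)
        have : |Rk1.lam0 m i j p.1| * Rk1.nv m p.1 ≤ (1/m) * 18 := by
          apply mul_le_mul h1 h2 h3 (by positivity)
        calc |Rk1.lam0 m i j p.1| * Rk1.nv m p.1 ≤ (1/m) * 18 := this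
          _ = 18 / m := by ring
      have := sqb _ _ habs
      calc f p ≤ (18/(m:ℝ))^2 := this
        _ = 324 / m^2 := by rw [div_pow]; norm_num
    have hcard4 : (Finset.univ.filter cond).card ≤ 4 := by
      have hinj : ∀ p ∈ Finset.univ.filter cond, ∀ q ∈ Finset.univ.filter cond,
          (fun p : {p : Fin m × Fin m // p.1 ≤ p.2} =>
            ((decide (p.1.1 = i), decide (p.1.2 = i)) : Bool × Bool)) p
          = (fun p : {p : Fin m × Fin m // p.1 ≤ p.2} =>
            ((decide (p.1.1 = i), decide (p.1.2 = i)) : Bool × Bool)) q → p = q := by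
        intro p hp q hq hpq
        rw [Finset.mem_filter] at hp hq
        simp only [Prod.mk.injEq, decide_eq_decide] at hpq
        have h1 : p.1.1 = q.1.1 := by
          by_cases hpi : p.1.1 = i
          · rw [hpi, ← hpq.1.mp hpi]
          · have hqi : ¬ q.1.1 = i := fun hq' => hpi (hpq.1.mpr hq')
            have hpj := hp.2.1.resolve_left hpi
            have hqj := hq.2.1.resolve_left hqi
            rw [hpj, hqj]
        have h2 : p.1.2 = q.1.2 := by
          by_cases hpi : p.1.2 = i
          · rw [hpi, ← hpq.2.mp hpi]
          · have hqi : ¬ q.1.2 = i := fun hq' => hpi (hpq.2.mpr hq')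
            have hpj := hp.2.2.resolve_left hpi
            have hqj := hq.2.2.resolve_left hqi
            rw [hpj, hqj]
        exact Subtype.ext (Prod.ext_iff.mpr ⟨h1, h2⟩)
      have := Finset.card_le_card_of_injOn _ (fun p _ => Finset.mem_univ
        (((decide (p.1.1 = i), decide (p.1.2 = i)) : Bool × Bool))) hinj
      simpa using this
    have hcardall : ((Finset.univ.filter (fun p => ¬ cond p)).card : ℝ) ≤ (m:ℝ)^2 := by
      have h1 : (Finset.univ.filter (fun p => ¬ cond p)).card
          ≤ Fintype.card {p : Fin m × Fin m // p.1 ≤ p.2} := by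
        apply le_trans (Finset.card_filter_le _ _)
        exact le_of_eq (Finset.card_univ)
      have h2 : Fintype.card {p : Fin m × Fin m // p.1 ≤ p.2} ≤ m * m := by
        rw [Rk1.card_pairs m]
        have : m * (m + 1) ≤ 2 * (m * m) := by nlinarith
        calc m * (m + 1) / 2 ≤ 2 * (m * m) / 2 := Nat.div_le_div_right this
          _ = m * m := by omega
      have h3 : ((Finset.univ.filter (fun p => ¬ cond p)).card : ℝ) ≤ (m : ℝ) * m := by
        exact_mod_cast le_trans h1 h2
      calc ((Finset.univ.filter (fun p => ¬ cond p)).card : ℝ) ≤ (m:ℝ) * m := h3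
        _ = (m:ℝ)^2 := by ring
    have htot : (∑ p : {p : Fin m × Fin m // p.1 ≤ p.2}, f p) ≤ 10000 := by
      rw [← hsplit]
      have hb1 : (∑ p ∈ Finset.univ.filter cond, f p) ≤ 4 * 1296 := by
        calc (∑ p ∈ Finset.univ.filter cond, f p)
            ≤ (Finset.univ.filter cond).card • (1296:ℝ) := Finset.sum_le_card_nsmul _ _ _ hbig
          _ = ((Finset.univ.filter cond).card : ℝ) * 1296 := by rw [nsmul_eq_mul]
          _ ≤ 4 * 1296 := by
              have : ((Finset.univ.filter cond).card : ℝ) ≤ 4 := by exact_mod_cast hcard4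
              nlinarith
      have hb2 : (∑ p ∈ Finset.univ.filter (fun p => ¬ cond p), f p) ≤ 324 := by
        calc (∑ p ∈ Finset.univ.filter (fun p => ¬ cond p), f p)
            ≤ (Finset.univ.filter (fun p => ¬ cond p)).card • (324 / (m:ℝ)^2) :=
              Finset.sum_le_card_nsmul _ _ _ hsmall
          _ = ((Finset.univ.filter (fun p => ¬ cond p)).card : ℝ) * (324 / m^2) := by
              rw [nsmul_eq_mul]
          _ ≤ (m:ℝ)^2 * (324 / m^2) := by
              apply mul_le_mul_of_nonneg_right hcardall (by positivity)
          _ = 324 := by field_simp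
      linarith
    rw [hsum2]
    calc Real.sqrt (∑ p : {p : Fin m × Fin m // p.1 ≤ p.2}, f p)
        ≤ Real.sqrt 10000 := Real.sqrt_le_sqrt htot
      _ = 100 := by
          rw [show (10000:ℝ) = 100^2 by norm_num, Real.sqrt_sq (by norm_num : (0:ℝ) ≤ 100)]
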